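/- Let A ∈ ℝ^{m×n} have nonzero columns a_1,…,a_n, let R ∈ ℝ^{m×m} be symmetric positive definite, Q = R⁻¹, and ε > 0. Let x ∈ ℝ^n with x ≥ 0 and Σ_{i=1}^n x_i = 1, and define R' = (1/(1+ε))·(R + Σ_{i=1}^n (x_i/‖a_i‖_Q²)·a_i a_iᵀ). Then det(R') ≥ (2/(1+ε)^m)·det(R). In particular, if ε = 1/(11m), then det(R') ≥ (16/9)·det(R). -/

import Mathlib

open Matrix Set MeasureTheory Pointwise ENNReal

noncomputable section

/-- Euclidean dot product on `Fin d → ℝ`. -/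
def dotp {d : ℕ} (u v : Fin d → ℝ) : ℝ := ∑ i, u i * v i

/-- Euclidean norm on `Fin d → ℝ`. -/
def norm2 {d : ℕ} (v : Fin d → ℝ) : ℝ := Real.sqrt (∑ i, v i ^ 2)

/-- Normalization `v / ‖v‖`, with the convention that `0` is mapped to `0`. -/
def nml {d : ℕ} (v : Fin d → ℝ) : Fin d → ℝ := (norm2 v)⁻¹ • v

/-- The `j`-th column of a matrix. -/
def mcol {d : ℕ} {ι : Type} (A : Matrix (Fin d) ι ℝ) (j : ι) : Fin d → ℝ := fun i => A i j

/-- Goffin's condition measure `ρ_A = max_{y ∈ im(A) \ {0}} min_j â_jᵀ ŷ`. -/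
def goffin {d : ℕ} {ι : Type} [Fintype ι] (A : Matrix (Fin d) ι ℝ) : ℝ :=
  sSup { r : ℝ | ∃ y : Fin d → ℝ, (∃ x : ι → ℝ, A.mulVec x = y) ∧ y ≠ 0 ∧
    r = ⨅ j : ι, dotp (nml (mcol A j)) (nml y) }

/-- The cone `Σ_A = {y : Aᵀ y ≥ 0}`. -/
def SigmaCone {d : ℕ} {ι : Type} (A : Matrix (Fin d) ι ℝ) : Set (Fin d → ℝ) :=
  { y | ∀ j, 0 ≤ dotp (mcol A j) y }

/-- `F_A = Σ_A ∩ B^d`. -/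
def FA {d : ℕ} {ι : Type} (A : Matrix (Fin d) ι ℝ) : Set (Fin d → ℝ) :=
  SigmaCone A ∩ { z | norm2 z ≤ 1 }

/-- `‖v‖_M = √(vᵀ M v)`. -/
def qnorm {d : ℕ} (M : Matrix (Fin d) (Fin d) ℝ) (v : Fin d → ℝ) : ℝ :=
  Real.sqrt (dotp v (M.mulVec v))

/-- The ellipsoid `E(M) = {z : ‖z‖_M ≤ 1}`. -/
def ell {d : ℕ} (M : Matrix (Fin d) (Fin d) ℝ) : Set (Fin d → ℝ) :=
  { z | qnorm M z ≤ 1 }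

/-- The width of a set `X` along `a`: `sup {aᵀz : z ∈ X}`. -/
def widthOf {d : ℕ} (X : Set (Fin d → ℝ)) (a : Fin d → ℝ) : ℝ :=
  sSup { r : ℝ | ∃ z ∈ X, r = dotp a z }

/-- `P_A = conv(â_1,…,â_n) ∩ (−conv(â_1,…,â_n))`. -/
def PA {d : ℕ} {ι : Type} (A : Matrix (Fin d) ι ℝ) : Set (Fin d → ℝ) :=
  convexHull ℝ (Set.range fun j => nml (mcol A j)) ∩
    (-(convexHull ℝ (Set.range fun j => nml (mcol A j))))

/-- `Δ_A`: maximum of `∏_{j ∈ B} ‖a_j‖` over sets `B` of linearly independent columns. -/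
def DeltaA {d n : ℕ} (A : Matrix (Fin d) (Fin n) ℝ) : ℝ :=
  sSup { p : ℝ | ∃ B : Finset (Fin n),
    LinearIndependent ℝ (fun j : {x // x ∈ B} => mcol A j.1) ∧ p = ∏ j ∈ B, norm2 (mcol A j) }

/-- `T*_A`: indices `i` such that some `y` with `Aᵀy ≥ 0` has `a_iᵀ y > 0`. -/
def TstarA {d : ℕ} {ι : Type} (A : Matrix (Fin d) ι ℝ) : Set ι :=
  { i | ∃ y : Fin d → ℝ, (∀ j, 0 ≤ dotp (mcol A j) y) ∧ 0 < dotp (mcol A i) y }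

/-- `S*_A`: indices `i` such that some `x ≥ 0` with `Ax = 0` has `x_i > 0`. -/
def SstarA {d : ℕ} {ι : Type} [Fintype ι] (A : Matrix (Fin d) ι ℝ) : Set ι :=
  { i | ∃ x : ι → ℝ, (∀ j, 0 ≤ x j) ∧ A.mulVec x = 0 ∧ 0 < x i }

/-- `ω_A = min_{i ∈ T*_A} width_{F_A}(â_i)`. -/
def omegaA {d : ℕ} {ι : Type} (A : Matrix (Fin d) ι ℝ) : ℝ :=
  sInf ((fun i => widthOf (FA A) (nml (mcol A i))) '' TstarA A)

section AuxLemmas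

private lemma aux_one_add_sum_le_prod {ι : Type*} (s : Finset ι) (f : ι → ℝ)
    (hf : ∀ i ∈ s, 0 ≤ f i) : 1 + ∑ i ∈ s, f i ≤ ∏ i ∈ s, (1 + f i) := by
  classical
  induction s using Finset.cons_induction with
  | empty => simp
  | cons a s ha ih =>
    rw [Finset.sum_cons, Finset.prod_cons]
    have hfa : 0 ≤ f a := hf a (Finset.mem_cons_self _ _)
    have hs : ∀ i ∈ s, 0 ≤ f i := fun i hi => hf i (Finset.mem_cons_of_mem hi)
    have hsum : 0 ≤ ∑ i ∈ s, f i := Finset.sum_nonneg hs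
    calc 1 + (f a + ∑ i ∈ s, f i) ≤ (1 + f a) * (1 + ∑ i ∈ s, f i) := by nlinarith
    _ ≤ (1 + f a) * ∏ i ∈ s, (1 + f i) :=
        mul_le_mul_of_nonneg_left (ih hs) (by linarith)

private lemma aux_psd_smul {d : ℕ} {M : Matrix (Fin d) (Fin d) ℝ} (hM : M.PosSemidef)
    {c : ℝ} (hc : 0 ≤ c) : (c • M).PosSemidef := by
  refine ⟨?_, fun y => ?_⟩
  · have := hM.1
    unfold Matrix.IsHermitian at this ⊢
    rw [Matrix.conjTranspose_smul, this]
    simp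
  · exact (hM.smul hc).2 y

private lemma aux_pow_bound (m : ℕ) (hm : 0 < m) (ε : ℝ) (hε : 0 < ε)
    (hεm : ε = 1 / (11 * (m : ℝ))) : (1 + ε) ^ m ≤ 11 / 10 := by
  have hm1 : (1:ℝ) ≤ (m:ℝ) := by exact_mod_cast hm
  have hmne : (m:ℝ) ≠ 0 := by linarith
  have hmε : (m:ℝ) * ε = 1 / 11 := by
    rw [hεm]; field_simp
  have hε11 : ε ≤ 1 / 11 := by nlinarith
  have hbern := one_add_mul_le_pow (show (-2:ℝ) ≤ -ε by linarith) m
  rw [show (1:ℝ) + -ε = 1 - ε by ring] at hbern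
  have hb : (10:ℝ) / 11 ≤ (1 - ε) ^ m := by nlinarith
  have hprod : (1 + ε) ^ m * (1 - ε) ^ m ≤ 1 := by
    rw [← mul_pow]
    exact pow_le_one₀ (by nlinarith) (by nlinarith)
  have hpow : (0:ℝ) < (1 + ε) ^ m := pow_pos (by linarith) m
  nlinarith

open scoped MatrixOrder in
private lemma aux_sqrt {d : ℕ} {R : Matrix (Fin d) (Fin d) ℝ} (hR : R.PosSemidef) :
    ∃ L : Matrix (Fin d) (Fin d) ℝ, L * L = R ∧ L.IsHermitian :=
  ⟨CFC.sqrt R, CFC.sqrt_mul_sqrt_self R hR.nonneg, (CFC.sqrt_nonneg R).posSemidef.1⟩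

end AuxLemmas

/-- Lemma 3.3: for the rescaled matrix
`R' = (R + Σᵢ (xᵢ/‖aᵢ‖_Q²) aᵢaᵢᵀ)/(1+ε)` (with `Q = R⁻¹`, `x ≥ 0`, `Σ xᵢ = 1`),
`det(R') ≥ (2/(1+ε)^m) det(R)`; in particular, if `ε = 1/(11m)`,
then `det(R') ≥ (16/9) det(R)`. -/
theorem det_rescaled_ge
    {m n : ℕ} (A : Matrix (Fin m) (Fin n) ℝ) (hcols : ∀ j, mcol A j ≠ 0)
    (R : Matrix (Fin m) (Fin m) ℝ) (hR : R.PosDef)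
    (ε : ℝ) (hε : 0 < ε)
    (x : Fin n → ℝ) (hx : ∀ i, 0 ≤ x i) (hx1 : ∑ i, x i = 1)
    (R' : Matrix (Fin m) (Fin m) ℝ)
    (hR' : R' = (1 / (1 + ε)) •
      (R + ∑ i, (x i / qnorm R⁻¹ (mcol A i) ^ 2) • vecMulVec (mcol A i) (mcol A i))) :
    2 / (1 + ε) ^ m * R.det ≤ R'.det ∧
      (ε = 1 / (11 * (m : ℝ)) → 16 / 9 * R.det ≤ R'.det) := by
  classical
  -- m = 0 is impossible
  rcases Nat.eq_zero_or_pos m with hm0 | hm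
  · exfalso
    have hn : Nonempty (Fin n) := by
      rcases isEmpty_or_nonempty (Fin n) with h | h
      · rw [Finset.univ_eq_empty, Finset.sum_empty] at hx1; norm_num at hx1
      · exact h
    obtain ⟨j⟩ := hn
    exact hcols j (by subst hm0; funext i; exact i.elim0)
  have hQ : (R⁻¹).PosDef := hR.inv
  set q : Fin n → ℝ := fun i => mcol A i ⬝ᵥ (R⁻¹ *ᵥ mcol A i) with hqdef
  have hq : ∀ i, 0 < q i := by
    intro i
    have := hQ.dotProduct_mulVec_pos (hcols i)
    simpa using this
  have hqnorm : ∀ i, qnorm R⁻¹ (mcol A i) ^ 2 = q i := by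
    intro i
    have : dotp (mcol A i) (R⁻¹ *ᵥ mcol A i) = q i := rfl
    rw [qnorm, this, Real.sq_sqrt (hq i).le]
  set S : Matrix (Fin m) (Fin m) ℝ :=
    ∑ i, (x i / q i) • vecMulVec (mcol A i) (mcol A i) with hSdef
  have hR'S : R' = (1 / (1 + ε)) • (R + S) := by
    rw [hR']
    congr 1
    congr 1
    exact Finset.sum_congr rfl fun i _ => by rw [hqnorm]
  -- S is positive semidefinite
  have hterm : ∀ i : Fin n, ((x i / q i) • vecMulVec (mcol A i) (mcol A i)).PosSemidef := by
    intro i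
    apply aux_psd_smul _ (div_nonneg (hx i) (hq i).le)
    have : vecMulVec (mcol A i) (mcol A i) = (replicateRow Unit (mcol A i))ᴴ * replicateRow Unit (mcol A i) := by
      rw [vecMulVec_eq Unit, conjTranspose_replicateRow]
      simp
    rw [this]
    exact posSemidef_conjTranspose_mul_self _
  have hS : S.PosSemidef := by
    rw [hSdef]
    apply Finset.sum_induction _ _ (fun a b => Matrix.PosSemidef.add) Matrix.PosSemidef.zero
    exact fun i _ => hterm i
  -- trace of S * R⁻¹ is 1
  have htrS : (S * R⁻¹).trace = 1 := by
    rw [hSdef, Finset.sum_mul, trace_sum]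
    rw [← hx1]
    refine Finset.sum_congr rfl fun i _ => ?_
    rw [smul_mul_assoc, trace_smul, smul_eq_mul]
    have : (vecMulVec (mcol A i) (mcol A i) * R⁻¹).trace = q i := by
      rw [Matrix.trace, hqdef]
      simp only [diag_apply, mul_apply, vecMulVec_apply, dotProduct, mulVec, Finset.mul_sum]
      rw [Finset.sum_comm]
      exact Finset.sum_congr rfl fun j _ => Finset.sum_congr rfl fun k _ => by ring
    rw [this, div_mul_cancel₀ _ (hq i).ne']
  -- square root of R
  obtain ⟨L, hLL, hLsym⟩ := aux_sqrt hR.posSemidef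
  have hdetR : 0 < R.det := hR.det_pos
  have hdetL : L.det ≠ 0 := by
    intro h
    rw [← hLL, det_mul, h, mul_zero] at hdetR
    exact lt_irrefl _ hdetR
  have hLunit : IsUnit L.det := isUnit_iff_ne_zero.mpr hdetL
  have hL1 : L * L⁻¹ = 1 := mul_nonsing_inv _ hLunit
  have hL2 : L⁻¹ * L = 1 := nonsing_inv_mul _ hLunit
  have hLinvH : (L⁻¹)ᴴ = L⁻¹ := by
    rw [conjTranspose_nonsing_inv, hLsym.eq]
  set M : Matrix (Fin m) (Fin m) ℝ := L⁻¹ * S * L⁻¹ with hMdef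
  have hM : M.PosSemidef := by
    have := hS.mul_mul_conjTranspose_same L⁻¹
    rwa [hLinvH] at this
  -- trace of M is 1
  have hLinv2 : L⁻¹ * L⁻¹ = R⁻¹ := by
    rw [← Matrix.mul_inv_rev, hLL]
  have htrM : M.trace = 1 := by
    rw [hMdef, trace_mul_comm, ← Matrix.mul_assoc, hLinv2, trace_mul_comm, htrS]
  -- eigenvalues
  have hMH : M.IsHermitian := hM.1
  set lam : Fin m → ℝ := hMH.eigenvalues with hlamdef
  have hlam : ∀ i, 0 ≤ lam i := hM.eigenvalues_nonneg
  set U : Matrix (Fin m) (Fin m) ℝ := (hMH.eigenvectorUnitary : Matrix (Fin m) (Fin m) ℝ) with hUdef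
  have hU1 : U * star U = 1 := mem_unitaryGroup_iff.mp hMH.eigenvectorUnitary.2
  have hU2 : star U * U = 1 := mem_unitaryGroup_iff'.mp hMH.eigenvectorUnitary.2
  have hspec : M = U * diagonal lam * star U := by
    have := hMH.spectral_theorem
    rw [Unitary.conjStarAlgAut_apply] at this
    exact this
  have htrlam : ∑ i, lam i = 1 := by
    rw [← htrM, hspec, trace_mul_comm, ← Matrix.mul_assoc, hU2, Matrix.one_mul, trace_diagonal]
  have h1M : (1 : Matrix (Fin m) (Fin m) ℝ) + M = U * diagonal (fun i => 1 + lam i) * star U := by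
    have hd : diagonal (fun i => 1 + lam i) = 1 + diagonal lam := by
      rw [← diagonal_one, diagonal_add]
    rw [hd, Matrix.mul_add, Matrix.add_mul, Matrix.mul_one, hU1, ← hspec]
  have hdet1M : (1 + M).det = ∏ i, (1 + lam i) := by
    rw [h1M, det_mul, det_mul, det_diagonal, mul_comm U.det, mul_assoc, mul_comm U.det,
      ← det_mul, hU2, det_one, mul_one]
  have hdet1M_ge : 2 ≤ (1 + M).det := by
    rw [hdet1M]
    have := aux_one_add_sum_le_prod Finset.univ lam (fun i _ => hlam i)
    rw [htrlam] at this
    linarith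
  -- decomposition of R + S
  have hLM : L * M * L = S := by
    rw [hMdef, ← Matrix.mul_assoc, ← Matrix.mul_assoc, hL1, Matrix.one_mul,
      Matrix.mul_assoc, hL2, Matrix.mul_one]
  have hdecomp : R + S = L * (1 + M) * L := by
    rw [Matrix.mul_add, Matrix.mul_one, Matrix.add_mul, hLL, hLM]
  have hdetRS : (R + S).det = R.det * (1 + M).det := by
    rw [hdecomp, det_mul, det_mul, ← hLL, det_mul]
    ring
  -- determinant of R'
  have hdetR' : R'.det = (1 / (1 + ε)) ^ m * ((R + S).det) := by
    rw [hR'S, det_smul]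
    simp [Fintype.card_fin]
  have hεpos : (0:ℝ) < 1 + ε := by linarith
  have hpow : (0:ℝ) < (1 + ε) ^ m := pow_pos hεpos m
  have main : 2 / (1 + ε) ^ m * R.det ≤ R'.det := by
    rw [hdetR', hdetRS]
    have h2 : 2 * R.det ≤ R.det * (1 + M).det := by nlinarith
    calc 2 / (1 + ε) ^ m * R.det = (1 / (1 + ε)) ^ m * (2 * R.det) := by
          rw [div_pow, one_pow]; ring
    _ ≤ (1 / (1 + ε)) ^ m * (R.det * (1 + M).det) :=
          mul_le_mul_of_nonneg_left h2 (by positivity)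
  refine ⟨main, fun hεm => ?_⟩
  have hup : (1 + ε) ^ m ≤ 11 / 10 := aux_pow_bound m hm ε hε hεm
  have h169 : 16 / 9 * R.det ≤ 2 / (1 + ε) ^ m * R.det := by
    apply mul_le_mul_of_nonneg_right _ hdetR.le
    rw [div_le_div_iff₀ (by norm_num) hpow]
    linarith [hup]
  exact le_trans h169 main
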